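/- Assuming the axiom of choice, in the path category EFF every propositional fibration is discrete. Consequently the class of discrete propositional fibrations in EFF satisfies propositional resizing: every propositional fibration belongs to it. -/

import Mathlib

namespace EffPaper

/-! ### A small kit for tracking by partial computable functions.

We encode "partial computable function" via Mathlib's `Partrec` on `ℕ →. ℕ`.
`CompComputes I O` says: there is a partial computable function which, on the input
`I x`, converges and outputs `O x` (for every `x` in some index type `X`).
`CompFinds I S` says: there is a partial computable function which, on the input
`I x`, converges and outputs some element of the set `S x`. -/

def CompComputes {X : Sort*} (I O : X → ℕ) : Prop :=
  ∃ F : ℕ →. ℕ, Partrec F ∧ ∀ x, O x ∈ F (I x)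

def CompFinds {X : Sort*} (I : X → ℕ) (S : X → Set ℕ) : Prop :=
  ∃ F : ℕ →. ℕ, Partrec F ∧ ∀ x, ∃ k, k ∈ F (I x) ∧ k ∈ S x

namespace CompComputes

protected theorem id {X : Sort*} (I : X → ℕ) : CompComputes I I :=
  ⟨fun n => Part.some n, Partrec.some, fun x => Part.mem_some _⟩

protected theorem const {X : Sort*} (I : X → ℕ) (c : ℕ) : CompComputes I fun _ => c :=
  ⟨fun _ => Part.some c, (Computable.const c).partrec, fun _ => Part.mem_some _⟩

protected theorem comp {X : Sort*} {I M O : X → ℕ}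
    (h₂ : CompComputes M O) (h₁ : CompComputes I M) : CompComputes I O := by
  obtain ⟨F₁, pF₁, s₁⟩ := h₁
  obtain ⟨F₂, pF₂, s₂⟩ := h₂
  refine ⟨fun n => (F₁ n).bind F₂, pF₁.bind (pF₂.comp Computable.snd), fun x => ?_⟩
  exact Part.mem_bind_iff.mpr ⟨M x, s₁ x, s₂ x⟩

protected theorem pair {X : Sort*} {I a b : X → ℕ}
    (ha : CompComputes I a) (hb : CompComputes I b) :
    CompComputes I (fun x => Nat.pair (a x) (b x)) := by
  obtain ⟨F₁, pF₁, s₁⟩ := ha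
  obtain ⟨F₂, pF₂, s₂⟩ := hb
  refine ⟨fun n => (F₁ n).bind fun u => (F₂ n).map fun v => Nat.pair u v, ?_, fun x => ?_⟩
  · refine pF₁.bind ?_
    have : Computable₂ fun (p : ℕ × ℕ) (v : ℕ) => Nat.pair p.2 v :=
      Primrec₂.to_comp (Primrec₂.natPair.comp (Primrec.snd.comp Primrec.fst) Primrec.snd)
    exact Partrec.map (pF₂.comp Computable.fst) this
  · exact Part.mem_bind_iff.mpr ⟨a x, s₁ x, (Part.mem_map_iff _).mpr ⟨b x, s₂ x, rfl⟩⟩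

protected theorem unpairL {X : Sort*} (I : X → ℕ) :
    CompComputes I (fun x => (I x).unpair.1) :=
  ⟨fun n => Part.some n.unpair.1,
    (Primrec.to_comp (Primrec.fst.comp Primrec.unpair)).partrec, fun _ => Part.mem_some _⟩

protected theorem unpairR {X : Sort*} (I : X → ℕ) :
    CompComputes I (fun x => (I x).unpair.2) :=
  ⟨fun n => Part.some n.unpair.2,
    (Primrec.to_comp (Primrec.snd.comp Primrec.unpair)).partrec, fun _ => Part.mem_some _⟩

protected theorem projL {X : Sort*} (a b : X → ℕ) :
    CompComputes (fun x => Nat.pair (a x) (b x)) a := by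
  have := CompComputes.unpairL (X := X) (fun x => Nat.pair (a x) (b x))
  simpa [Nat.unpair_pair] using this

protected theorem projR {X : Sort*} (a b : X → ℕ) :
    CompComputes (fun x => Nat.pair (a x) (b x)) b := by
  have := CompComputes.unpairR (X := X) (fun x => Nat.pair (a x) (b x))
  simpa [Nat.unpair_pair] using this

protected theorem precomp {X Y : Sort*} {I O : X → ℕ} (h : CompComputes I O) (e : Y → X) :
    CompComputes (fun y => I (e y)) (fun y => O (e y)) := by
  obtain ⟨F, pF, s⟩ := h
  exact ⟨F, pF, fun y => s (e y)⟩

protected theorem toFinds {X : Sort*} {I o : X → ℕ} {S : X → Set ℕ}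
    (h : CompComputes I o) (hm : ∀ x, o x ∈ S x) : CompFinds I S := by
  obtain ⟨F, pF, s⟩ := h
  exact ⟨F, pF, fun x => ⟨o x, s x, hm x⟩⟩

end CompComputes

namespace CompFinds

protected theorem toComputes {X : Sort*} {I : X → ℕ} {S : X → Set ℕ} (h : CompFinds I S) :
    ∃ o : X → ℕ, (∀ x, o x ∈ S x) ∧ CompComputes I o := by
  obtain ⟨F, pF, s⟩ := h
  refine ⟨fun x => (s x).choose, fun x => (s x).choose_spec.2, F, pF, fun x => (s x).choose_spec.1⟩

/-- Reindex a `CompFinds` along `e` and chase the input through a computable function. -/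
protected theorem via {Y X : Sort*} {J : X → ℕ} {S : X → Set ℕ} (h : CompFinds J S)
    {I : Y → ℕ} (e : Y → X) (hc : CompComputes I (fun y => J (e y))) :
    CompFinds I (fun y => S (e y)) := by
  obtain ⟨o, hm, hcc⟩ := h.toComputes
  exact CompComputes.toFinds ((hcc.precomp e).comp hc) (fun y => hm (e y))

end CompFinds

end EffPaper

namespace EffPaper

open CategoryTheory

universe v u

/-! ### Path categories (Van den Berg–Moerdijk style), abstractly.

A `PathStruct` on a category is a pair of classes of maps: fibrations and equivalences.
`IsPathCategory` expresses the seven axioms of a path category. -/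

structure PathStruct (C : Type u) [Category.{v} C] where
  Fib : ∀ ⦃X Y : C⦄, (X ⟶ Y) → Prop
  Eqv : ∀ ⦃X Y : C⦄, (X ⟶ Y) → Prop

section PathCatDefs

variable {C : Type u} [Category.{v} C]

/-- `T` is a terminal object. -/
def IsTerminalObj (T : C) : Prop := ∀ Z : C, ∃ f : Z ⟶ T, ∀ g : Z ⟶ T, g = f

/-- The square with projections `p₁, p₂` is a pullback of the cospan `f, g`. -/
def IsPB {P X Y Z : C} (p₁ : P ⟶ X) (p₂ : P ⟶ Y) (f : X ⟶ Z) (g : Y ⟶ Z) : Prop :=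
  p₁ ≫ f = p₂ ≫ g ∧ ∀ (Q : C) (q₁ : Q ⟶ X) (q₂ : Q ⟶ Y), q₁ ≫ f = q₂ ≫ g →
    ∃! h : Q ⟶ P, h ≫ p₁ = q₁ ∧ h ≫ p₂ = q₂

/-- `p₁, p₂` exhibit their common domain as a binary product of `X` and `Y`. -/
def IsBinProd {P X Y : C} (p₁ : P ⟶ X) (p₂ : P ⟶ Y) : Prop :=
  ∀ (Q : C) (q₁ : Q ⟶ X) (q₂ : Q ⟶ Y), ∃! h : Q ⟶ P, h ≫ p₁ = q₁ ∧ h ≫ p₂ = q₂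

variable (S : PathStruct C)

/-- `X → PX → X × X` is a path object for `X`: the first map is an equivalence, the
second (the pairing of `s` and `t` into a binary product `X × X`) is a fibration,
and the composite is the diagonal. -/
def IsPathObj {X PX : C} (r : X ⟶ PX) (s t : PX ⟶ X) : Prop :=
  S.Eqv r ∧ r ≫ s = 𝟙 X ∧ r ≫ t = 𝟙 X ∧
  ∃ (W : C) (π₁ π₂ : W ⟶ X) (h : PX ⟶ W),
    IsBinProd π₁ π₂ ∧ h ≫ π₁ = s ∧ h ≫ π₂ = t ∧ S.Fib h

/-- A path object for `p : X ⟶ I` in the slice path category `C(I)`: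
a factorisation of the fibrewise diagonal `X ⟶ X ×_I X` as an equivalence `r`
followed by a fibration. -/
def IsRelPathObj {X I PX : C} (p : X ⟶ I) (r : X ⟶ PX) (s t : PX ⟶ X) : Prop :=
  S.Eqv r ∧ r ≫ s = 𝟙 X ∧ r ≫ t = 𝟙 X ∧ s ≫ p = t ≫ p ∧
  ∃ (W : C) (π₁ π₂ : W ⟶ X) (h : PX ⟶ W),
    IsPB π₁ π₂ p p ∧ h ≫ π₁ = s ∧ h ≫ π₂ = t ∧ S.Fib h

/-- The seven axioms for a path category. -/
structure IsPathCategory : Prop where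
  fib_of_iso : ∀ {X Y : C} (f : X ⟶ Y), IsIso f → S.Fib f
  fib_comp : ∀ {X Y Z : C} (f : X ⟶ Y) (g : Y ⟶ Z), S.Fib f → S.Fib g → S.Fib (f ≫ g)
  terminal : ∃ T : C, IsTerminalObj T ∧ ∀ (X : C) (f : X ⟶ T), S.Fib f
  pullback : ∀ {X Y Z : C} (f : X ⟶ Z) (g : Y ⟶ Z), S.Fib f →
    ∃ (P : C) (p₁ : P ⟶ X) (p₂ : P ⟶ Y), IsPB p₁ p₂ f g ∧ S.Fib p₂
  eqv_of_iso : ∀ {X Y : C} (f : X ⟶ Y), IsIso f → S.Eqv f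
  two_out_of_six : ∀ {X Y Z W : C} (f : X ⟶ Y) (g : Y ⟶ Z) (h : Z ⟶ W),
    S.Eqv (f ≫ g) → S.Eqv (g ≫ h) →
    S.Eqv f ∧ S.Eqv g ∧ S.Eqv h ∧ S.Eqv (f ≫ g ≫ h)
  path_obj : ∀ X : C, ∃ (PX : C) (r : X ⟶ PX) (s t : PX ⟶ X), IsPathObj S r s t
  triv_fib_pb : ∀ {X Y Z P : C} (f : X ⟶ Z) (g : Y ⟶ Z) (p₁ : P ⟶ X) (p₂ : P ⟶ Y),
    S.Fib f → S.Eqv f → IsPB p₁ p₂ f g → S.Fib p₂ ∧ S.Eqv p₂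
  triv_fib_sect : ∀ {X Y : C} (f : X ⟶ Y), S.Fib f → S.Eqv f → ∃ s : Y ⟶ X, s ≫ f = 𝟙 Y

/-- Two parallel maps are homotopic: `(f,g)` factors through some path object. -/
def Homotopic {Z X : C} (f g : Z ⟶ X) : Prop :=
  ∃ (PX : C) (r : X ⟶ PX) (s t : PX ⟶ X), IsPathObj S r s t ∧
    ∃ H : Z ⟶ PX, H ≫ s = f ∧ H ≫ t = g

/-- `f` and `g` are fibrewise homotopic over the codomain of `p`:
`(f,g)` factors through some path object of `p` in the slice. -/
def FibHomotopic {Z X I : C} (p : X ⟶ I) (f g : Z ⟶ X) : Prop :=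
  ∃ (PX : C) (r : X ⟶ PX) (s t : PX ⟶ X), IsRelPathObj S p r s t ∧
    ∃ H : Z ⟶ PX, H ≫ s = f ∧ H ≫ t = g

/-- `IsNTypeFib S n f` says that `f` is a fibration of `(n-2)`-types; so `n = 0`
corresponds to hlevel `-2` (trivial fibrations), `n = 1` to propositions,
`n = 2` to sets and `n = 3` to groupoids. -/
def IsNTypeFib : ℕ → ∀ ⦃Y X : C⦄, (Y ⟶ X) → Prop
  | 0, _, _, f => S.Fib f ∧ S.Eqv f
  | n+1, Y, _, f => S.Fib f ∧ ∃ (PY W : C) (r : Y ⟶ PY) (s t : PY ⟶ Y)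
      (π₁ π₂ : W ⟶ Y) (h : PY ⟶ W),
      IsRelPathObj S f r s t ∧ IsPB π₁ π₂ f f ∧ h ≫ π₁ = s ∧ h ≫ π₂ = t ∧
      IsNTypeFib n h

/-- The (strictly) commutative square with vertical fibrations `g` (left) and `f` (right),
top `top` and bottom `bot`, is a homotopy pullback: the induced map to the actual
pullback is an equivalence. -/
def IsHomotopyPB {D Cc B A : C} (g : D ⟶ Cc) (top : D ⟶ B) (f : B ⟶ A) (bot : Cc ⟶ A) :
    Prop :=
  g ≫ bot = top ≫ f ∧ ∃ (P : C) (p₁ : P ⟶ Cc) (p₂ : P ⟶ B) (h : D ⟶ P),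
    IsPB p₁ p₂ bot f ∧ h ≫ p₁ = g ∧ h ≫ p₂ = top ∧ S.Eqv h

/-- A transport structure on the fibration `p : Y ⟶ X`, relative to the path object
`(PX, r, s, t)` and the pullback `(Q, q₁, q₂)` of `s : PX ⟶ X` along `p`:
a map `Γ : Y ×_X PX ⟶ Y` with `p ∘ Γ = t ∘ q₂` and `Γ ∘ (1_Y, r ∘ p) ≃_X 1_Y`. -/
def IsTransport {Y X PX Q : C} (p : Y ⟶ X) (r : X ⟶ PX) (s t : PX ⟶ X)
    (q₁ : Q ⟶ Y) (q₂ : Q ⟶ PX) (Γ : Q ⟶ Y) : Prop :=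
  Γ ≫ p = q₂ ≫ t ∧
  ∀ j : Y ⟶ Q, j ≫ q₁ = 𝟙 Y → j ≫ q₂ = p ≫ r → FibHomotopic S p (j ≫ Γ) (𝟙 Y)

/-- A fibration `p : Y ⟶ X` is univalent: whenever `f, g : Z ⟶ X` and
`w : f*p ⟶ g*p` is an equivalence over `Z`, there is a homotopy `H` from `f` to `g`
such that `w` is fibrewise homotopic over `Z` to the map induced by `H` and a
transport structure on `p`. -/
def Univalent {Y X : C} (p : Y ⟶ X) : Prop :=
  ∀ {Z Zf Zg : C} (f g : Z ⟶ X) (a₁ : Zf ⟶ Z) (a₂ : Zf ⟶ Y) (b₁ : Zg ⟶ Z) (b₂ : Zg ⟶ Y),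
    IsPB a₁ a₂ f p → IsPB b₁ b₂ g p →
    ∀ w : Zf ⟶ Zg, w ≫ b₁ = a₁ → S.Eqv w →
    ∃ (PX Q : C) (r : X ⟶ PX) (s t : PX ⟶ X) (q₁ : Q ⟶ Y) (q₂ : Q ⟶ PX) (Γ : Q ⟶ Y)
      (H : Z ⟶ PX) (k : Zf ⟶ Q) (w' : Zf ⟶ Zg),
      IsPathObj S r s t ∧ IsPB q₁ q₂ p s ∧ IsTransport S p r s t q₁ q₂ Γ ∧
      H ≫ s = f ∧ H ≫ t = g ∧
      k ≫ q₁ = a₂ ∧ k ≫ q₂ = a₁ ≫ H ∧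
      w' ≫ b₁ = a₁ ∧ w' ≫ b₂ = k ≫ Γ ∧
      FibHomotopic S b₁ w w'

/-- `π : E ⟶ U` is a representation for the class `Small`: it is small, and every
small fibration is a homotopy pullback of it. -/
def IsRepresentation (Small : ∀ ⦃X Y : C⦄, (X ⟶ Y) → Prop) {E U : C} (π : E ⟶ U) : Prop :=
  Small π ∧ ∀ ⦃B A : C⦄ (f : B ⟶ A), Small f →
    ∃ (c : A ⟶ U) (top : B ⟶ E), IsHomotopyPB S f top π c

/-- `M` is a good lift for the universal property of the homotopy Π-type
`(pE, u₁, u₂, ε)` of `g` along `f`, at the map `h : A ⟶ X` with chosen pullback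
`(Ah, v₁, v₂)` of `h` along `f` and `m : f*h ⟶ g` over `Y`. -/
def HPiLiftGood {Y X Z E F A Ah : C} (f : Y ⟶ X) (g : Z ⟶ Y) (pE : E ⟶ X)
    (u₁ : F ⟶ E) (u₂ : F ⟶ Y) (ε : F ⟶ Z)
    (h : A ⟶ X) (v₁ : Ah ⟶ A) (v₂ : Ah ⟶ Y) (m : Ah ⟶ Z) (M : A ⟶ E) : Prop :=
  M ≫ pE = h ∧ ∀ fM : Ah ⟶ F, fM ≫ u₁ = v₁ ≫ M → fM ≫ u₂ = v₂ →
    FibHomotopic S g (fM ≫ ε) m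

/-- `(pE, u₁, u₂, ε)` is a homotopy Π-type of the fibration `g : Z ⟶ Y` along the
fibration `f : Y ⟶ X`.  Here `pE : E ⟶ X` is the Π-fibration, `(F, u₁, u₂)` is a
pullback of `pE` along `f`, and `ε : f*pE ⟶ g` is the counit (a map over `Y`). -/
structure IsHPi {Y X Z E F : C} (f : Y ⟶ X) (g : Z ⟶ Y) (pE : E ⟶ X)
    (u₁ : F ⟶ E) (u₂ : F ⟶ Y) (ε : F ⟶ Z) : Prop where
  fib : S.Fib pE
  pb : IsPB u₁ u₂ pE f
  over_ : ε ≫ g = u₂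
  lift : ∀ {A Ah : C} (h : A ⟶ X) (v₁ : Ah ⟶ A) (v₂ : Ah ⟶ Y), IsPB v₁ v₂ h f →
    ∀ m : Ah ⟶ Z, m ≫ g = v₂ →
      ∃ M : A ⟶ E, HPiLiftGood S f g pE u₁ u₂ ε h v₁ v₂ m M
  unique : ∀ {A Ah : C} (h : A ⟶ X) (v₁ : Ah ⟶ A) (v₂ : Ah ⟶ Y), IsPB v₁ v₂ h f →
    ∀ m : Ah ⟶ Z, m ≫ g = v₂ → ∀ M M' : A ⟶ E,
      HPiLiftGood S f g pE u₁ u₂ ε h v₁ v₂ m M →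
      HPiLiftGood S f g pE u₁ u₂ ε h v₁ v₂ m M' →
      FibHomotopic S pE M M'

/-- The path category has homotopy Π-types. -/
def HasHPi : Prop := ∀ ⦃Y X Z : C⦄ (f : Y ⟶ X) (g : Z ⟶ Y), S.Fib f → S.Fib g →
  ∃ (E F : C) (pE : E ⟶ X) (u₁ : F ⟶ E) (u₂ : F ⟶ Y) (ε : F ⟶ Z),
    IsHPi S f g pE u₁ u₂ ε

/-- A class of small fibrations: contained in the fibrations, containing all
isomorphisms, closed under composition and stable under homotopy pullback. -/
def IsSmallClass (Small : ∀ ⦃X Y : C⦄, (X ⟶ Y) → Prop) : Prop :=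
  (∀ ⦃X Y : C⦄ (f : X ⟶ Y), Small f → S.Fib f) ∧
  (∀ ⦃X Y : C⦄ (f : X ⟶ Y), IsIso f → Small f) ∧
  (∀ ⦃X Y Z : C⦄ (f : X ⟶ Y) (g : Y ⟶ Z), Small f → Small g → Small (f ≫ g)) ∧
  (∀ ⦃D Cc B A : C⦄ (g : D ⟶ Cc) (top : D ⟶ B) (f : B ⟶ A) (bot : Cc ⟶ A),
    S.Fib g → S.Fib f → Small f → IsHomotopyPB S g top f bot → Small g)

/-- The class `Small` is closed under homotopy Π-types along arbitrary fibrations: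
it is impredicative (polymorphic). -/
def ClosedUnderHPi (Small : ∀ ⦃X Y : C⦄, (X ⟶ Y) → Prop) : Prop :=
  ∀ ⦃Y X Z : C⦄ (f : Y ⟶ X) (g : Z ⟶ Y), S.Fib f → Small g →
    ∀ ⦃E F : C⦄ (pE : E ⟶ X) (u₁ : F ⟶ E) (u₂ : F ⟶ Y) (ε : F ⟶ Z),
      IsHPi S f g pE u₁ u₂ ε → Small pE

end PathCatDefs

end EffPaper
open CategoryTheory
namespace EffPaper
-- [assume p1 kit present]

/-! ### The category `EFF`. -/

/-- An object of `EFF`: a set `A`, a realizer function `α : A → ℕ`, sets of 1-cells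
`hom a a' ⊆ ℕ`, and partial computable functions computing identity, inverse and
composite 1-cells from the realizers of the relevant data. -/
structure EffObj : Type 1 where
  A : Type
  α : A → ℕ
  hom : A → A → Set ℕ
  idc : CompFinds (fun a : A => α a) (fun a => hom a a)
  invc : CompFinds
    (fun x : {p : A × A × ℕ // p.2.2 ∈ hom p.1 p.2.1} =>
      Nat.pair (α x.1.1) (Nat.pair (α x.1.2.1) x.1.2.2))
    (fun x => hom x.1.2.1 x.1.1)
  compc : CompFinds
    (fun x : {p : A × A × A × ℕ × ℕ //
        p.2.2.2.1 ∈ hom p.1 p.2.1 ∧ p.2.2.2.2 ∈ hom p.2.1 p.2.2.1} =>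
      Nat.pair (α x.1.1) (Nat.pair (α x.1.2.1) (Nat.pair (α x.1.2.2.1)
        (Nat.pair x.1.2.2.2.1 x.1.2.2.2.2))))
    (fun x => hom x.1.1 x.1.2.2.1)

/-- The 1-cells of an object of `EFF` between `a` and `a'`. -/
def EffObj.Cell (A : EffObj) (a a' : A.A) : Type := {n : ℕ // n ∈ A.hom a a'}

/-- A morphism of `EFF`: a function on 0-cells and functions on 1-cells, both
computably tracked. -/
structure EffHom (B A : EffObj) : Type where
  f0 : B.A → A.A
  f1 : ∀ b b' : B.A, B.Cell b b' → A.Cell (f0 b) (f0 b')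
  tr0 : CompComputes (fun b : B.A => B.α b) (fun b => A.α (f0 b))
  tr1 : CompComputes
    (fun x : (b : B.A) × (b' : B.A) × B.Cell b b' =>
      Nat.pair (B.α x.1) (Nat.pair (B.α x.2.1) x.2.2.val))
    (fun x => (f1 x.1 x.2.1 x.2.2).val)

instance : Category.{0} EffObj where
  Hom B A := EffHom B A
  id A :=
    { f0 := fun a => a
      f1 := fun _ _ π => π
      tr0 := CompComputes.id _
      tr1 := (CompComputes.projR _ _).comp (CompComputes.projR _ _) }
  comp {X Y Z} f g :=
    { f0 := fun b => g.f0 (f.f0 b)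
      f1 := fun b b' π => g.f1 _ _ (f.f1 b b' π)
      tr0 := (g.tr0.precomp f.f0).comp f.tr0
      tr1 := by
        have hg := g.tr1.precomp
          (fun x : (b : X.A) × (b' : X.A) × X.Cell b b' =>
            (⟨f.f0 x.1, f.f0 x.2.1, f.f1 x.1 x.2.1 x.2.2⟩ :
              (b : Y.A) × (b' : Y.A) × Y.Cell b b'))
        refine hg.comp ?_
        refine CompComputes.pair ?_ (CompComputes.pair ?_ f.tr1)
        · exact (f.tr0.precomp (fun x : (b : X.A) × (b' : X.A) × X.Cell b b' => x.1)).comp (CompComputes.projL _ _)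
        · exact (f.tr0.precomp (fun x : (b : X.A) × (b' : X.A) × X.Cell b b' => x.2.1)).comp
            ((CompComputes.projL _ _).comp (CompComputes.projR _ _)) }

end EffPaper
namespace EffPaper
open CategoryTheory

/-! ### Homotopies, equivalences and fibrations in `EFF`. -/

/-- Two parallel maps in `EFF` are homotopic if there is a partial computable function
computing, from the realizer of each `b`, a 1-cell from `f b` to `g b`. -/
def EffHomotopic {B A : EffObj} (f g : EffHom B A) : Prop :=
  CompFinds (fun b : B.A => B.α b) (fun b => A.hom (f.f0 b) (g.f0 b))

/-- A map in `EFF` is a (homotopy) equivalence if it has a homotopy inverse. -/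
def EffEqv {B A : EffObj} (f : B ⟶ A) : Prop :=
  ∃ g : A ⟶ B, EffHomotopic (f ≫ g) (𝟙 B) ∧ EffHomotopic (g ≫ f) (𝟙 A)

/-- A map in `EFF` is a fibration: (i) 1-cells `π : f b → a` downstairs can be
computably lifted to 1-cells `ρ : b → b'` upstairs with `f b' = a`, `f ρ = π`;
(ii) given `ρ ∈ ℬ(b,b')` and `π ∈ 𝒜(fb,fb')` one can compute `ρ' ∈ ℬ(b,b')`
with `f ρ' = π`. -/
def EffFib {B A : EffObj} (f : B ⟶ A) : Prop :=
  (∃ φ ψ : ℕ →. ℕ, Partrec φ ∧ Partrec ψ ∧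
    ∀ (b : B.A) (a : A.A) (π : ℕ), π ∈ A.hom (f.f0 b) a →
      ∃ (b' : B.A) (ρ : B.Cell b b'),
        f.f0 b' = a ∧ (f.f1 b b' ρ).val = π ∧
        B.α b' ∈ φ (Nat.pair (B.α b) (Nat.pair (A.α a) π)) ∧
        ρ.val ∈ ψ (Nat.pair (B.α b) (Nat.pair (A.α a) π))) ∧
  (∃ χ : ℕ →. ℕ, Partrec χ ∧
    ∀ (b b' : B.A) (ρ : B.Cell b b') (π : ℕ), π ∈ A.hom (f.f0 b) (f.f0 b') →
      ∃ ρ' : B.Cell b b', (f.f1 b b' ρ').val = π ∧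
        ρ'.val ∈ χ (Nat.pair (B.α b) (Nat.pair (B.α b') (Nat.pair ρ.val π))))

/-- The path structure on `EFF`: fibrations and (homotopy) equivalences. -/
def EffPS : PathStruct EffObj where
  Fib := fun {_ _} f => EffFib f
  Eqv := fun {_ _} f => EffEqv f

/-- A fibration in `EFF` is a standard discrete fibration if elements of the domain
are determined by their image and their realizer. -/
def EffStdDisc {B A : EffObj} (f : B ⟶ A) : Prop :=
  EffFib f ∧ ∀ b b' : B.A, f.f0 b = f.f0 b' → B.α b = B.α b' → b = b'

/-- A fibration in `EFF` is discrete if it can be written as a standard discrete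
fibration after an equivalence. -/
def EffDisc {B A : EffObj} (f : B ⟶ A) : Prop :=
  EffFib f ∧ ∃ (B' : EffObj) (w : B ⟶ B') (g : B' ⟶ A),
    EffEqv w ∧ EffStdDisc g ∧ w ≫ g = f

end EffPaper
namespace EffPaper
open CategoryTheory

section Kit
variable {X : Sort*}

theorem CompComputes.congr_out {I O O' : X → ℕ} (h : CompComputes I O)
    (e : ∀ x, O x = O' x) : CompComputes I O' := by
  have : O = O' := funext e
  exact this ▸ h

theorem CompComputes.congr_in {I I' O : X → ℕ} (h : CompComputes I O)
    (e : ∀ x, I x = I' x) : CompComputes I' O := by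
  have : I = I' := funext e
  exact this ▸ h

theorem proj3_1 (a b c : X → ℕ) :
    CompComputes (fun x => Nat.pair (a x) (Nat.pair (b x) (c x))) a :=
  CompComputes.projL _ _

theorem proj3_2 (a b c : X → ℕ) :
    CompComputes (fun x => Nat.pair (a x) (Nat.pair (b x) (c x))) b :=
  (CompComputes.projL b c).comp (CompComputes.projR a _)

theorem proj3_3 (a b c : X → ℕ) :
    CompComputes (fun x => Nat.pair (a x) (Nat.pair (b x) (c x))) c :=
  (CompComputes.projR b c).comp (CompComputes.projR a _)

theorem proj5_1 (a b c d e : X → ℕ) :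
    CompComputes (fun x => Nat.pair (a x) (Nat.pair (b x) (Nat.pair (c x)
      (Nat.pair (d x) (e x))))) a := CompComputes.projL _ _

theorem proj5_2 (a b c d e : X → ℕ) :
    CompComputes (fun x => Nat.pair (a x) (Nat.pair (b x) (Nat.pair (c x)
      (Nat.pair (d x) (e x))))) b :=
  (CompComputes.projL b _).comp (CompComputes.projR a _)

theorem proj5_3 (a b c d e : X → ℕ) :
    CompComputes (fun x => Nat.pair (a x) (Nat.pair (b x) (Nat.pair (c x)
      (Nat.pair (d x) (e x))))) c :=
  ((proj3_2 b c (fun x => Nat.pair (d x) (e x)))).comp (CompComputes.projR a _)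

theorem proj5_4 (a b c d e : X → ℕ) :
    CompComputes (fun x => Nat.pair (a x) (Nat.pair (b x) (Nat.pair (c x)
      (Nat.pair (d x) (e x))))) d :=
  ((CompComputes.projL d e).comp (proj3_3 b c _)).comp (CompComputes.projR a _)

theorem proj5_5 (a b c d e : X → ℕ) :
    CompComputes (fun x => Nat.pair (a x) (Nat.pair (b x) (Nat.pair (c x)
      (Nat.pair (d x) (e x))))) e :=
  ((CompComputes.projR d e).comp (proj3_3 b c _)).comp (CompComputes.projR a _)

end Kit

theorem CompComputes.ofMem {X : Sort*} {F : ℕ →. ℕ} (pF : Partrec F) {I O : X → ℕ}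
    (m : ∀ x, O x ∈ F (I x)) : CompComputes I O := ⟨F, pF, m⟩

theorem EffObj.id' (D : EffObj) {X : Sort*} {I : X → ℕ} (a : X → D.A)
    (h : CompComputes I fun x => D.α (a x)) :
    ∃ σ : X → ℕ, (∀ x, σ x ∈ D.hom (a x) (a x)) ∧ CompComputes I σ := by
  obtain ⟨o, hm, hc⟩ := D.idc.toComputes
  exact ⟨fun x => o (a x), fun x => hm (a x), (hc.precomp a).comp h⟩

theorem EffObj.inv' (D : EffObj) {X : Sort*} {I : X → ℕ} (a a' : X → D.A) (π : X → ℕ)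
    (hπ : ∀ x, π x ∈ D.hom (a x) (a' x))
    (h1 : CompComputes I fun x => D.α (a x)) (h2 : CompComputes I fun x => D.α (a' x))
    (h3 : CompComputes I π) :
    ∃ σ : X → ℕ, (∀ x, σ x ∈ D.hom (a' x) (a x)) ∧ CompComputes I σ := by
  obtain ⟨o, hm, hc⟩ := D.invc.toComputes
  refine ⟨fun x => o ⟨(a x, a' x, π x), hπ x⟩, fun x => hm ⟨(a x, a' x, π x), hπ x⟩, ?_⟩
  exact (hc.precomp fun x => ⟨(a x, a' x, π x), hπ x⟩).comp (h1.pair (h2.pair h3))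

theorem EffObj.comp' (D : EffObj) {X : Sort*} {I : X → ℕ} (a₀ a₁ a₂ : X → D.A)
    (π₀ π₁ : X → ℕ)
    (hπ₀ : ∀ x, π₀ x ∈ D.hom (a₀ x) (a₁ x)) (hπ₁ : ∀ x, π₁ x ∈ D.hom (a₁ x) (a₂ x))
    (h0 : CompComputes I fun x => D.α (a₀ x)) (h1 : CompComputes I fun x => D.α (a₁ x))
    (h2 : CompComputes I fun x => D.α (a₂ x))
    (g0 : CompComputes I π₀) (g1 : CompComputes I π₁) :
    ∃ σ : X → ℕ, (∀ x, σ x ∈ D.hom (a₀ x) (a₂ x)) ∧ CompComputes I σ := by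
  obtain ⟨o, hm, hc⟩ := D.compc.toComputes
  refine ⟨fun x => o ⟨(a₀ x, a₁ x, a₂ x, π₀ x, π₁ x), hπ₀ x, hπ₁ x⟩,
    fun x => hm ⟨(a₀ x, a₁ x, a₂ x, π₀ x, π₁ x), hπ₀ x, hπ₁ x⟩, ?_⟩
  exact (hc.precomp fun x => ⟨(a₀ x, a₁ x, a₂ x, π₀ x, π₁ x), hπ₀ x, hπ₁ x⟩).comp
    (h0.pair (h1.pair (h2.pair (g0.pair g1))))

theorem EffHom.ext' {X Y : EffObj} {f g : EffHom X Y} (h0 : f.f0 = g.f0)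
    (h1 : ∀ b b' (ρ : X.Cell b b'), (f.f1 b b' ρ).val = (g.f1 b b' ρ).val) : f = g := by
  obtain ⟨f0, f1, ft0, ft1⟩ := f
  obtain ⟨g0, g1, gt0, gt1⟩ := g
  dsimp at h0 h1
  subst h0
  have : f1 = g1 := funext fun b => funext fun b' => funext fun ρ => Subtype.ext (h1 b b' ρ)
  subst this
  rfl

theorem EffFib.lift' {B A : EffObj} {f : B ⟶ A} (hf : EffFib f) {X : Sort*} {I : X → ℕ}
    (b : X → B.A) (a : X → A.A) (π : X → ℕ)
    (hπ : ∀ x, π x ∈ A.hom (f.f0 (b x)) (a x))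
    (h1 : CompComputes I fun x => B.α (b x)) (h2 : CompComputes I fun x => A.α (a x))
    (h3 : CompComputes I π) :
    ∃ (b' : X → B.A) (ρ : ∀ x, B.Cell (b x) (b' x)),
      (∀ x, f.f0 (b' x) = a x) ∧ (∀ x, (f.f1 (b x) (b' x) (ρ x)).val = π x) ∧
      CompComputes I (fun x => B.α (b' x)) ∧ CompComputes I (fun x => (ρ x).val) := by
  obtain ⟨⟨φ, ψ, pφ, pψ, hs⟩, -⟩ := hf
  choose b' ρ he hv hφ hψ using fun x => hs (b x) (a x) (π x) (hπ x)
  refine ⟨b', ρ, he, hv, ?_, ?_⟩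
  · exact (CompComputes.ofMem pφ hφ).comp (h1.pair (h2.pair h3))
  · exact (CompComputes.ofMem pψ hψ).comp (h1.pair (h2.pair h3))

theorem EffFib.adjust' {B A : EffObj} {f : B ⟶ A} (hf : EffFib f) {X : Sort*} {I : X → ℕ}
    (b b' : X → B.A) (ρ : ∀ x, B.Cell (b x) (b' x)) (π : X → ℕ)
    (hπ : ∀ x, π x ∈ A.hom (f.f0 (b x)) (f.f0 (b' x)))
    (h1 : CompComputes I fun x => B.α (b x)) (h2 : CompComputes I fun x => B.α (b' x))
    (h3 : CompComputes I fun x => (ρ x).val) (h4 : CompComputes I π) :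
    ∃ ρ' : ∀ x, B.Cell (b x) (b' x),
      (∀ x, (f.f1 (b x) (b' x) (ρ' x)).val = π x) ∧
      CompComputes I (fun x => (ρ' x).val) := by
  obtain ⟨-, χ, pχ, hs⟩ := hf
  choose ρ' hv hχ using fun x => hs (b x) (b' x) (ρ x) (π x) (hπ x)
  exact ⟨ρ', hv, (CompComputes.ofMem pχ hχ).comp (h1.pair (h2.pair (h3.pair h4)))⟩

section Q
variable {B A : EffObj} (f : B ⟶ A)

/-- The strict kernel-pair-like object of `f`. -/
def QA : Type := {p : B.A × B.A // f.f0 p.1 = f.f0 p.2}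

def Qalpha (q : QA f) : ℕ := Nat.pair (B.α q.1.1) (B.α q.1.2)

def Qhom (q q' : QA f) : Set ℕ :=
  {n | ∃ (ρ₁ : B.Cell q.1.1 q'.1.1) (ρ₂ : B.Cell q.1.2 q'.1.2),
    n = Nat.pair ρ₁.val ρ₂.val ∧
    (f.f1 q.1.1 q'.1.1 ρ₁).val = (f.f1 q.1.2 q'.1.2 ρ₂).val}

theorem cQ1 : CompComputes (Qalpha f) fun q : QA f => B.α q.1.1 :=
  CompComputes.projL _ _

theorem cQ2 : CompComputes (Qalpha f) fun q : QA f => B.α q.1.2 :=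
  CompComputes.projR _ _

theorem Qidc (hf : EffFib f) : CompFinds (Qalpha f) fun q => Qhom f q q := by
  obtain ⟨ρ₁, m₁, c₁⟩ := B.id' (fun q : QA f => q.1.1) (cQ1 f)
  obtain ⟨ρ₂, m₂, c₂⟩ := B.id' (fun q : QA f => q.1.2) (cQ2 f)
  have cπ : CompComputes (Qalpha f)
      fun q : QA f => (f.f1 q.1.1 q.1.1 ⟨ρ₁ q, m₁ q⟩).val :=
    (f.tr1.precomp fun q : QA f =>
        (⟨q.1.1, q.1.1, ⟨ρ₁ q, m₁ q⟩⟩ : (b : B.A) × (b' : B.A) × B.Cell b b')).comp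
      ((cQ1 f).pair ((cQ1 f).pair c₁))
  have hπ : ∀ q : QA f, (f.f1 q.1.1 q.1.1 ⟨ρ₁ q, m₁ q⟩).val
      ∈ A.hom (f.f0 q.1.2) (f.f0 q.1.2) := by
    intro q
    rw [← q.2]
    exact (f.f1 q.1.1 q.1.1 ⟨ρ₁ q, m₁ q⟩).prop
  obtain ⟨ρ₂', hv, c₂'⟩ := EffFib.adjust' hf (fun q : QA f => q.1.2) (fun q => q.1.2)
    (fun q => ⟨ρ₂ q, m₂ q⟩) (fun q => (f.f1 q.1.1 q.1.1 ⟨ρ₁ q, m₁ q⟩).val) hπ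
    (cQ2 f) (cQ2 f) c₂ cπ
  refine (c₁.pair c₂').toFinds fun q => ?_
  exact ⟨⟨ρ₁ q, m₁ q⟩, ρ₂' q, rfl, (hv q).symm⟩

end Q

section Q2
variable {B A : EffObj} (f : B ⟶ A)

def QIn (x : {p : QA f × QA f × ℕ // p.2.2 ∈ Qhom f p.1 p.2.1}) : ℕ :=
  Nat.pair (Qalpha f x.1.1) (Nat.pair (Qalpha f x.1.2.1) x.1.2.2)

theorem Qinvc (hf : EffFib f) : CompFinds (QIn f) (fun x => Qhom f x.1.2.1 x.1.1) := by
  set T := {p : QA f × QA f × ℕ // p.2.2 ∈ Qhom f p.1 p.2.1} with hT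
  have hx : ∀ x : T, ∃ (ρ₁ : B.Cell x.1.1.1.1 x.1.2.1.1.1)
      (ρ₂ : B.Cell x.1.1.1.2 x.1.2.1.1.2),
      x.1.2.2 = Nat.pair ρ₁.val ρ₂.val ∧
      (f.f1 _ _ ρ₁).val = (f.f1 _ _ ρ₂).val := fun x => x.2
  choose ρ₁ ρ₂ hn heq using hx
  have cA1 : CompComputes (QIn f) (fun x : T => Qalpha f x.1.1) := proj3_1 _ _ _
  have cA2 : CompComputes (QIn f) (fun x : T => Qalpha f x.1.2.1) := proj3_2 _ _ _
  have cn : CompComputes (QIn f) (fun x : T => x.1.2.2) := proj3_3 _ _ _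
  have cb11 : CompComputes (QIn f) (fun x : T => B.α x.1.1.1.1) :=
    (CompComputes.projL _ _).comp cA1
  have cb12 : CompComputes (QIn f) (fun x : T => B.α x.1.1.1.2) :=
    (CompComputes.projR _ _).comp cA1
  have cb21 : CompComputes (QIn f) (fun x : T => B.α x.1.2.1.1.1) :=
    (CompComputes.projL _ _).comp cA2
  have cb22 : CompComputes (QIn f) (fun x : T => B.α x.1.2.1.1.2) :=
    (CompComputes.projR _ _).comp cA2
  have cρ₁ : CompComputes (QIn f) (fun x : T => (ρ₁ x).val) :=
    ((CompComputes.unpairL _).comp cn).congr_out fun x => by rw [hn x]; simp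
  have cρ₂ : CompComputes (QIn f) (fun x : T => (ρ₂ x).val) :=
    ((CompComputes.unpairR _).comp cn).congr_out fun x => by rw [hn x]; simp
  obtain ⟨σ₁, mσ₁, cσ₁⟩ := B.inv' (fun x : T => x.1.1.1.1) (fun x => x.1.2.1.1.1)
    (fun x => (ρ₁ x).val) (fun x => (ρ₁ x).prop) cb11 cb21 cρ₁
  obtain ⟨σ₂, mσ₂, cσ₂⟩ := B.inv' (fun x : T => x.1.1.1.2) (fun x => x.1.2.1.1.2)
    (fun x => (ρ₂ x).val) (fun x => (ρ₂ x).prop) cb12 cb22 cρ₂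
  have cπ : CompComputes (QIn f)
      (fun x : T => (f.f1 x.1.2.1.1.1 x.1.1.1.1 ⟨σ₁ x, mσ₁ x⟩).val) :=
    (f.tr1.precomp fun x : T =>
        (⟨x.1.2.1.1.1, x.1.1.1.1, ⟨σ₁ x, mσ₁ x⟩⟩ :
          (b : B.A) × (b' : B.A) × B.Cell b b')).comp
      (cb21.pair (cb11.pair cσ₁))
  have hπ : ∀ x : T, (f.f1 x.1.2.1.1.1 x.1.1.1.1 ⟨σ₁ x, mσ₁ x⟩).val
      ∈ A.hom (f.f0 x.1.2.1.1.2) (f.f0 x.1.1.1.2) := by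
    intro x
    rw [← x.1.1.2, ← x.1.2.1.2]
    exact (f.f1 x.1.2.1.1.1 x.1.1.1.1 ⟨σ₁ x, mσ₁ x⟩).prop
  obtain ⟨ρ₂', hv, cρ₂'⟩ := EffFib.adjust' hf (fun x : T => x.1.2.1.1.2)
    (fun x => x.1.1.1.2) (fun x => ⟨σ₂ x, mσ₂ x⟩)
    (fun x => (f.f1 x.1.2.1.1.1 x.1.1.1.1 ⟨σ₁ x, mσ₁ x⟩).val) hπ cb22 cb12 cσ₂ cπ
  refine (cσ₁.pair cρ₂').toFinds fun x => ?_
  exact ⟨⟨σ₁ x, mσ₁ x⟩, ρ₂' x, rfl, (hv x).symm⟩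

end Q2

section Q3
variable {B A : EffObj} (f : B ⟶ A)

def QIn2 (x : {p : QA f × QA f × QA f × ℕ × ℕ //
    p.2.2.2.1 ∈ Qhom f p.1 p.2.1 ∧ p.2.2.2.2 ∈ Qhom f p.2.1 p.2.2.1}) : ℕ :=
  Nat.pair (Qalpha f x.1.1) (Nat.pair (Qalpha f x.1.2.1) (Nat.pair (Qalpha f x.1.2.2.1)
    (Nat.pair x.1.2.2.2.1 x.1.2.2.2.2)))

theorem Qcompc (hf : EffFib f) :
    CompFinds (QIn2 f) (fun x => Qhom f x.1.1 x.1.2.2.1) := by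
  set T := {p : QA f × QA f × QA f × ℕ × ℕ //
    p.2.2.2.1 ∈ Qhom f p.1 p.2.1 ∧ p.2.2.2.2 ∈ Qhom f p.2.1 p.2.2.1} with hT
  have hx1 : ∀ x : T, ∃ (ρ₁ : B.Cell x.1.1.1.1 x.1.2.1.1.1)
      (ρ₂ : B.Cell x.1.1.1.2 x.1.2.1.1.2),
      x.1.2.2.2.1 = Nat.pair ρ₁.val ρ₂.val ∧
      (f.f1 _ _ ρ₁).val = (f.f1 _ _ ρ₂).val := fun x => x.2.1
  have hx2 : ∀ x : T, ∃ (τ₁ : B.Cell x.1.2.1.1.1 x.1.2.2.1.1.1)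
      (τ₂ : B.Cell x.1.2.1.1.2 x.1.2.2.1.1.2),
      x.1.2.2.2.2 = Nat.pair τ₁.val τ₂.val ∧
      (f.f1 _ _ τ₁).val = (f.f1 _ _ τ₂).val := fun x => x.2.2
  choose ρ₁ ρ₂ hn heq using hx1
  choose τ₁ τ₂ hn₂ heq₂ using hx2
  have cA1 : CompComputes (QIn2 f) (fun x : T => Qalpha f x.1.1) := proj5_1 _ _ _ _ _
  have cA2 : CompComputes (QIn2 f) (fun x : T => Qalpha f x.1.2.1) := proj5_2 _ _ _ _ _
  have cA3 : CompComputes (QIn2 f) (fun x : T => Qalpha f x.1.2.2.1) := proj5_3 _ _ _ _ _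
  have cn1 : CompComputes (QIn2 f) (fun x : T => x.1.2.2.2.1) := proj5_4 _ _ _ _ _
  have cn2 : CompComputes (QIn2 f) (fun x : T => x.1.2.2.2.2) := proj5_5 _ _ _ _ _
  have cb11 : CompComputes (QIn2 f) (fun x : T => B.α x.1.1.1.1) :=
    (CompComputes.projL _ _).comp cA1
  have cb12 : CompComputes (QIn2 f) (fun x : T => B.α x.1.1.1.2) :=
    (CompComputes.projR _ _).comp cA1
  have cb21 : CompComputes (QIn2 f) (fun x : T => B.α x.1.2.1.1.1) :=
    (CompComputes.projL _ _).comp cA2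
  have cb22 : CompComputes (QIn2 f) (fun x : T => B.α x.1.2.1.1.2) :=
    (CompComputes.projR _ _).comp cA2
  have cb31 : CompComputes (QIn2 f) (fun x : T => B.α x.1.2.2.1.1.1) :=
    (CompComputes.projL _ _).comp cA3
  have cb32 : CompComputes (QIn2 f) (fun x : T => B.α x.1.2.2.1.1.2) :=
    (CompComputes.projR _ _).comp cA3
  have cρ₁ : CompComputes (QIn2 f) (fun x : T => (ρ₁ x).val) :=
    ((CompComputes.unpairL _).comp cn1).congr_out fun x => by rw [hn x]; simp
  have cρ₂ : CompComputes (QIn2 f) (fun x : T => (ρ₂ x).val) :=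
    ((CompComputes.unpairR _).comp cn1).congr_out fun x => by rw [hn x]; simp
  have cτ₁ : CompComputes (QIn2 f) (fun x : T => (τ₁ x).val) :=
    ((CompComputes.unpairL _).comp cn2).congr_out fun x => by rw [hn₂ x]; simp
  have cτ₂ : CompComputes (QIn2 f) (fun x : T => (τ₂ x).val) :=
    ((CompComputes.unpairR _).comp cn2).congr_out fun x => by rw [hn₂ x]; simp
  obtain ⟨κ₁, mκ₁, cκ₁⟩ := B.comp' (fun x : T => x.1.1.1.1) (fun x => x.1.2.1.1.1)
    (fun x => x.1.2.2.1.1.1) (fun x => (ρ₁ x).val) (fun x => (τ₁ x).val)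
    (fun x => (ρ₁ x).prop) (fun x => (τ₁ x).prop) cb11 cb21 cb31 cρ₁ cτ₁
  obtain ⟨κ₂, mκ₂, cκ₂⟩ := B.comp' (fun x : T => x.1.1.1.2) (fun x => x.1.2.1.1.2)
    (fun x => x.1.2.2.1.1.2) (fun x => (ρ₂ x).val) (fun x => (τ₂ x).val)
    (fun x => (ρ₂ x).prop) (fun x => (τ₂ x).prop) cb12 cb22 cb32 cρ₂ cτ₂
  have cπ : CompComputes (QIn2 f)
      (fun x : T => (f.f1 x.1.1.1.1 x.1.2.2.1.1.1 ⟨κ₁ x, mκ₁ x⟩).val) :=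
    (f.tr1.precomp fun x : T =>
        (⟨x.1.1.1.1, x.1.2.2.1.1.1, ⟨κ₁ x, mκ₁ x⟩⟩ :
          (b : B.A) × (b' : B.A) × B.Cell b b')).comp
      (cb11.pair (cb31.pair cκ₁))
  have hπ : ∀ x : T, (f.f1 x.1.1.1.1 x.1.2.2.1.1.1 ⟨κ₁ x, mκ₁ x⟩).val
      ∈ A.hom (f.f0 x.1.1.1.2) (f.f0 x.1.2.2.1.1.2) := by
    intro x
    rw [← x.1.1.2, ← x.1.2.2.1.2]
    exact (f.f1 x.1.1.1.1 x.1.2.2.1.1.1 ⟨κ₁ x, mκ₁ x⟩).prop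
  obtain ⟨ρ₂', hv, cρ₂'⟩ := EffFib.adjust' hf (fun x : T => x.1.1.1.2)
    (fun x => x.1.2.2.1.1.2) (fun x => ⟨κ₂ x, mκ₂ x⟩)
    (fun x => (f.f1 x.1.1.1.1 x.1.2.2.1.1.1 ⟨κ₁ x, mκ₁ x⟩).val) hπ cb12 cb32 cκ₂ cπ
  refine (cκ₁.pair cρ₂').toFinds fun x => ?_
  exact ⟨⟨κ₁ x, mκ₁ x⟩, ρ₂' x, rfl, (hv x).symm⟩

noncomputable def Qobj (hf : EffFib f) : EffObj where
  A := QA f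
  α := Qalpha f
  hom := Qhom f
  idc := Qidc f hf
  invc := Qinvc f hf
  compc := Qcompc f hf

end Q3

section Q4
variable {B A : EffObj} (f : B ⟶ A) (hf : EffFib f)

noncomputable def Qproj₁ : Qobj f hf ⟶ B where
  f0 := fun q => q.1.1
  f1 := fun _ _ ρ => ρ.2.choose
  tr0 := cQ1 f
  tr1 := by
    have base : CompComputes
        (fun x : (b : QA f) × (b' : QA f) × (Qobj f hf).Cell b b' =>
          Nat.pair (Qalpha f x.1) (Nat.pair (Qalpha f x.2.1) x.2.2.val))
        (fun x => x.2.2.val.unpair.1) :=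
      (CompComputes.unpairL _).comp (proj3_3 _ _ _)
    exact base.congr_out fun x => by
      exact (congrArg (fun n => (Nat.unpair n).1) x.2.2.2.choose_spec.choose_spec.1).trans
        (congrArg Prod.fst (Nat.unpair_pair _ _))

noncomputable def Qproj₂ : Qobj f hf ⟶ B where
  f0 := fun q => q.1.2
  f1 := fun _ _ ρ => ρ.2.choose_spec.choose
  tr0 := cQ2 f
  tr1 := by
    have base : CompComputes
        (fun x : (b : QA f) × (b' : QA f) × (Qobj f hf).Cell b b' =>
          Nat.pair (Qalpha f x.1) (Nat.pair (Qalpha f x.2.1) x.2.2.val))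
        (fun x => x.2.2.val.unpair.2) :=
      (CompComputes.unpairR _).comp (proj3_3 _ _ _)
    exact base.congr_out fun x => by
      exact (congrArg (fun n => (Nat.unpair n).2) x.2.2.2.choose_spec.choose_spec.1).trans
        (congrArg Prod.snd (Nat.unpair_pair _ _))

theorem Qcomm : Qproj₁ f hf ≫ f = Qproj₂ f hf ≫ f :=
  EffHom.ext' (funext fun q => q.2)
    (fun _ _ ρ => ρ.2.choose_spec.choose_spec.2)

end Q4

theorem key {B A : EffObj} {f : B ⟶ A} (hNT : IsNTypeFib EffPS 1 f) :
    ∃ c : QA f → ℕ, (∀ q, c q ∈ B.hom q.1.1 q.1.2) ∧ CompComputes (Qalpha f) c := by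
  obtain ⟨hfib, PY, W, r, s, t, p₁, p₂, m, hrel, hpb, hmp₁, hmp₂, hm0⟩ := hNT
  have hf : EffFib f := hfib
  have hmf : EffFib m := hm0.1
  obtain ⟨e, -, He⟩ := (hm0.2 : EffEqv m)
  obtain ⟨γ, hγ, cγ⟩ := CompFinds.toComputes He
  obtain ⟨P, -, hPm, -, cP0, -⟩ := EffFib.lift' hmf (b := fun w : W.A => e.f0 w)
    (a := fun w : W.A => w) (π := γ) (fun w => hγ w) e.tr0 (CompComputes.id _) cγ
  obtain ⟨d, -, Hd⟩ := (hrel.1 : EffEqv r)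
  obtain ⟨δ, hδ, cδ⟩ := CompFinds.toComputes Hd
  obtain ⟨k, ⟨hk₁, hk₂⟩, -⟩ := hpb.2 (Qobj f hf) (Qproj₁ f hf) (Qproj₂ f hf) (Qcomm f hf)
  -- index over q : QA f
  have cW : CompComputes (Qalpha f) (fun q => W.α (k.f0 q)) := k.tr0
  have cPq : CompComputes (Qalpha f) (fun q => PY.α (P (k.f0 q))) :=
    (cP0.precomp k.f0).comp cW
  have cu : CompComputes (Qalpha f) (fun q => B.α (d.f0 (P (k.f0 q)))) :=
    (d.tr0.precomp fun q => P (k.f0 q)).comp cPq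
  have cru : CompComputes (Qalpha f) (fun q => PY.α (r.f0 (d.f0 (P (k.f0 q))))) :=
    (r.tr0.precomp fun q => d.f0 (P (k.f0 q))).comp cu
  have cδP : CompComputes (Qalpha f) (fun q => δ (P (k.f0 q))) :=
    (cδ.precomp fun q => P (k.f0 q)).comp cPq
  -- endpoint equalities
  have hs0 : ∀ y, s.f0 (r.f0 y) = y := fun y =>
    congrFun (congrArg EffHom.f0 hrel.2.1) y
  have ht0 : ∀ y, t.f0 (r.f0 y) = y := fun y =>
    congrFun (congrArg EffHom.f0 hrel.2.2.1) y
  have hsP : ∀ q : QA f, s.f0 (P (k.f0 q)) = q.1.1 := by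
    intro q
    have h1 : p₁.f0 (m.f0 (P (k.f0 q))) = s.f0 (P (k.f0 q)) :=
      congrFun (congrArg EffHom.f0 hmp₁) (P (k.f0 q))
    have h2 : p₁.f0 (m.f0 (P (k.f0 q))) = p₁.f0 (k.f0 q) :=
      congrArg p₁.f0 (hPm (k.f0 q))
    have h3 : p₁.f0 (k.f0 q) = q.1.1 := congrFun (congrArg EffHom.f0 hk₁) q
    rw [← h1, h2, h3]
  have htP : ∀ q : QA f, t.f0 (P (k.f0 q)) = q.1.2 := by
    intro q
    have h1 : p₂.f0 (m.f0 (P (k.f0 q))) = t.f0 (P (k.f0 q)) :=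
      congrFun (congrArg EffHom.f0 hmp₂) (P (k.f0 q))
    have h2 : p₂.f0 (m.f0 (P (k.f0 q))) = p₂.f0 (k.f0 q) :=
      congrArg p₂.f0 (hPm (k.f0 q))
    have h3 : p₂.f0 (k.f0 q) = q.1.2 := congrFun (congrArg EffHom.f0 hk₂) q
    rw [← h1, h2, h3]
  -- the two B-cells out of d(P(k q))
  have mσ : ∀ q : QA f,
      (s.f1 _ _ (⟨δ (P (k.f0 q)), hδ (P (k.f0 q))⟩ :
        PY.Cell (r.f0 (d.f0 (P (k.f0 q)))) (P (k.f0 q)))).val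
        ∈ B.hom (d.f0 (P (k.f0 q))) q.1.1 := by
    intro q
    have hhom : B.hom (s.f0 (r.f0 (d.f0 (P (k.f0 q))))) (s.f0 (P (k.f0 q)))
        = B.hom (d.f0 (P (k.f0 q))) q.1.1 := by rw [hs0, hsP]
    exact hhom.subset (s.f1 _ _ (⟨δ (P (k.f0 q)), hδ (P (k.f0 q))⟩ :
        PY.Cell (r.f0 (d.f0 (P (k.f0 q)))) (P (k.f0 q)))).prop
  have mτ : ∀ q : QA f,
      (t.f1 _ _ (⟨δ (P (k.f0 q)), hδ (P (k.f0 q))⟩ :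
        PY.Cell (r.f0 (d.f0 (P (k.f0 q)))) (P (k.f0 q)))).val
        ∈ B.hom (d.f0 (P (k.f0 q))) q.1.2 := by
    intro q
    have hhom : B.hom (t.f0 (r.f0 (d.f0 (P (k.f0 q))))) (t.f0 (P (k.f0 q)))
        = B.hom (d.f0 (P (k.f0 q))) q.1.2 := by rw [ht0, htP]
    exact hhom.subset (t.f1 _ _ (⟨δ (P (k.f0 q)), hδ (P (k.f0 q))⟩ :
        PY.Cell (r.f0 (d.f0 (P (k.f0 q)))) (P (k.f0 q)))).prop
  have cσ : CompComputes (Qalpha f) (fun q =>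
      (s.f1 _ _ (⟨δ (P (k.f0 q)), hδ (P (k.f0 q))⟩ :
        PY.Cell (r.f0 (d.f0 (P (k.f0 q)))) (P (k.f0 q)))).val) :=
    (s.tr1.precomp fun q : QA f =>
        (⟨r.f0 (d.f0 (P (k.f0 q))), P (k.f0 q),
          ⟨δ (P (k.f0 q)), hδ (P (k.f0 q))⟩⟩ :
          (b : PY.A) × (b' : PY.A) × PY.Cell b b')).comp
      (cru.pair (cPq.pair cδP))
  have cτ : CompComputes (Qalpha f) (fun q =>
      (t.f1 _ _ (⟨δ (P (k.f0 q)), hδ (P (k.f0 q))⟩ :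
        PY.Cell (r.f0 (d.f0 (P (k.f0 q)))) (P (k.f0 q)))).val) :=
    (t.tr1.precomp fun q : QA f =>
        (⟨r.f0 (d.f0 (P (k.f0 q))), P (k.f0 q),
          ⟨δ (P (k.f0 q)), hδ (P (k.f0 q))⟩⟩ :
          (b : PY.A) × (b' : PY.A) × PY.Cell b b')).comp
      (cru.pair (cPq.pair cδP))
  obtain ⟨σ', mσ', cσ'⟩ := B.inv' (fun q : QA f => d.f0 (P (k.f0 q)))
    (fun q => q.1.1) _ mσ cu (cQ1 f) cσ
  obtain ⟨c, mc, cc⟩ := B.comp' (fun q : QA f => q.1.1)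
    (fun q => d.f0 (P (k.f0 q))) (fun q => q.1.2) σ' _ mσ' mτ
    (cQ1 f) cu (cQ2 f) cσ' cτ
  exact ⟨c, mc, cc⟩

section D
variable {B A : EffObj} (f : B ⟶ A)

def DA : Type := {p : A.A × ℕ // ∃ b, f.f0 b = p.1 ∧ B.α b = p.2}

noncomputable def wit (x : DA f) : B.A := x.2.choose

theorem wit_f0 (x : DA f) : f.f0 (wit f x) = x.1.1 := x.2.choose_spec.1

theorem wit_α (x : DA f) : B.α (wit f x) = x.1.2 := x.2.choose_spec.2

def Dalpha (x : DA f) : ℕ := x.1.2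

def Dhom (x x' : DA f) : Set ℕ := A.hom x.1.1 x'.1.1

theorem Dtr : CompComputes (Dalpha f) (fun x => A.α x.1.1) := by
  have h := f.tr0.precomp (wit f)
  exact (h.congr_in fun x => wit_α f x).congr_out fun x => by rw [wit_f0]

def DIn1 (y : {p : DA f × DA f × ℕ // p.2.2 ∈ Dhom f p.1 p.2.1}) : ℕ :=
  Nat.pair (Dalpha f y.1.1) (Nat.pair (Dalpha f y.1.2.1) y.1.2.2)

def DIn2 (y : {p : DA f × DA f × DA f × ℕ × ℕ //
    p.2.2.2.1 ∈ Dhom f p.1 p.2.1 ∧ p.2.2.2.2 ∈ Dhom f p.2.1 p.2.2.1}) : ℕ :=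
  Nat.pair (Dalpha f y.1.1) (Nat.pair (Dalpha f y.1.2.1) (Nat.pair (Dalpha f y.1.2.2.1)
    (Nat.pair y.1.2.2.2.1 y.1.2.2.2.2)))

theorem Didc : CompFinds (Dalpha f) (fun x => Dhom f x x) :=
  A.idc.via (fun x : DA f => x.1.1) (Dtr f)

theorem Dinvc : CompFinds (DIn1 f) (fun y => Dhom f y.1.2.1 y.1.1) := by
  refine A.invc.via
    (fun y : {p : DA f × DA f × ℕ // p.2.2 ∈ Dhom f p.1 p.2.1} =>
      ⟨(y.1.1.1.1, y.1.2.1.1.1, y.1.2.2), y.2⟩) ?_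
  exact (((Dtr f).precomp fun y : {p : DA f × DA f × ℕ // p.2.2 ∈ Dhom f p.1 p.2.1} => y.1.1).comp (proj3_1 _ _ _)).pair
    ((((Dtr f).precomp fun y : {p : DA f × DA f × ℕ // p.2.2 ∈ Dhom f p.1 p.2.1} => y.1.2.1).comp (proj3_2 _ _ _)).pair (proj3_3 _ _ _))

theorem Dcompc : CompFinds (DIn2 f) (fun y => Dhom f y.1.1 y.1.2.2.1) := by
  refine A.compc.via
    (fun y : {p : DA f × DA f × DA f × ℕ × ℕ //
        p.2.2.2.1 ∈ Dhom f p.1 p.2.1 ∧ p.2.2.2.2 ∈ Dhom f p.2.1 p.2.2.1} =>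
      ⟨(y.1.1.1.1, y.1.2.1.1.1, y.1.2.2.1.1.1, y.1.2.2.2.1, y.1.2.2.2.2),
        y.2.1, y.2.2⟩) ?_
  exact (((Dtr f).precomp fun y : {p : DA f × DA f × DA f × ℕ × ℕ //
        p.2.2.2.1 ∈ Dhom f p.1 p.2.1 ∧ p.2.2.2.2 ∈ Dhom f p.2.1 p.2.2.1} => y.1.1).comp (proj5_1 _ _ _ _ _)).pair
    ((((Dtr f).precomp fun y : {p : DA f × DA f × DA f × ℕ × ℕ //
        p.2.2.2.1 ∈ Dhom f p.1 p.2.1 ∧ p.2.2.2.2 ∈ Dhom f p.2.1 p.2.2.1} => y.1.2.1).comp (proj5_2 _ _ _ _ _)).pair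
      ((((Dtr f).precomp fun y : {p : DA f × DA f × DA f × ℕ × ℕ //
        p.2.2.2.1 ∈ Dhom f p.1 p.2.1 ∧ p.2.2.2.2 ∈ Dhom f p.2.1 p.2.2.1} => y.1.2.2.1).comp (proj5_3 _ _ _ _ _)).pair
        ((proj5_4 _ _ _ _ _).pair (proj5_5 _ _ _ _ _))))

noncomputable def Dobj : EffObj where
  A := DA f
  α := Dalpha f
  hom := Dhom f
  idc := Didc f
  invc := Dinvc f
  compc := Dcompc f

noncomputable def wmor : B ⟶ Dobj f where
  f0 := fun b => ⟨(f.f0 b, B.α b), b, rfl, rfl⟩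
  f1 := fun b b' ρ => ⟨(f.f1 b b' ρ).val, (f.f1 b b' ρ).prop⟩
  tr0 := CompComputes.id _
  tr1 := f.tr1

noncomputable def gmor : Dobj f ⟶ A where
  f0 := fun x => x.1.1
  f1 := fun _ _ c => ⟨c.val, c.prop⟩
  tr0 := Dtr f
  tr1 := proj3_3 _ _ _

theorem wg : wmor f ≫ gmor f = f :=
  EffHom.ext' (funext fun _ => rfl) (fun _ _ _ => rfl)

theorem ginj : ∀ x x' : DA f, (gmor f).f0 x = (gmor f).f0 x' →
    (Dobj f).α x = (Dobj f).α x' → x = x' := by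
  intro x x' h1 h2
  exact Subtype.ext (Prod.ext h1 h2)

theorem gfib (hf : EffFib f) : EffFib (gmor f) := by
  obtain ⟨⟨φ, ψ, pφ, pψ, hliftf⟩, -⟩ := hf
  have c2 : Computable fun n : ℕ => n.unpair.2 :=
    Primrec.to_comp (Primrec.snd.comp Primrec.unpair)
  constructor
  · refine ⟨φ, fun n => Part.some n.unpair.2.unpair.2, pφ, (c2.comp c2).partrec, ?_⟩
    intro x a π hπ
    have hπ' : π ∈ A.hom (f.f0 (wit f x)) a := by rw [wit_f0 f x]; exact hπ
    obtain ⟨b', ρ, h1, _h2, h3, _h4⟩ := hliftf (wit f x) a π hπ'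
    refine ⟨⟨(a, B.α b'), b', h1, rfl⟩, ⟨π, hπ⟩, rfl, rfl, ?_, ?_⟩
    · have hw : B.α (wit f x) = (Dobj f).α x := wit_α f x
      rwa [hw] at h3
    · simp
  · refine ⟨fun n => Part.some n.unpair.2.unpair.2.unpair.2,
      (c2.comp (c2.comp c2)).partrec, ?_⟩
    intro x x' ρ π hπ
    exact ⟨⟨π, hπ⟩, rfl, by simp⟩

end D

theorem mainDisc {B A : EffObj} (f : B ⟶ A) (hNT : IsNTypeFib EffPS 1 f) :
    EffDisc f := by
  have hf : EffFib f := hNT.1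
  obtain ⟨c, mc, cc⟩ := key hNT
  -- the homotopy inverse of `wmor`
  set S3 := (x : DA f) × (x' : DA f) × (Dobj f).Cell x x' with hS3
  have hπ : ∀ y : S3, y.2.2.val ∈ A.hom (f.f0 (wit f y.1)) y.2.1.1.1 := by
    intro y
    have hhom : A.hom y.1.1.1 y.2.1.1.1 = A.hom (f.f0 (wit f y.1)) y.2.1.1.1 := by
      rw [wit_f0]
    exact hhom.subset y.2.2.prop
  have h1 : CompComputes (fun y : S3 =>
      Nat.pair (Dalpha f y.1) (Nat.pair (Dalpha f y.2.1) y.2.2.val))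
      (fun y => B.α (wit f y.1)) :=
    (proj3_1 _ _ _).congr_out fun y => (wit_α f y.1).symm
  have h2 : CompComputes (fun y : S3 =>
      Nat.pair (Dalpha f y.1) (Nat.pair (Dalpha f y.2.1) y.2.2.val))
      (fun y => A.α y.2.1.1.1) :=
    ((Dtr f).precomp fun y : S3 => y.2.1).comp (proj3_2 _ _ _)
  obtain ⟨b'', ρ₀, hb1, -, cb'', cρ₀⟩ := EffFib.lift' hf (fun y : S3 => wit f y.1)
    (fun y => y.2.1.1.1) (fun y => y.2.2.val) hπ h1 h2 (proj3_3 _ _ _)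
  have eQ : ∀ y : S3, f.f0 (b'' y) = f.f0 (wit f y.2.1) := by
    intro y; rw [hb1 y, wit_f0]
  have cwit2 : CompComputes (fun y : S3 =>
      Nat.pair (Dalpha f y.1) (Nat.pair (Dalpha f y.2.1) y.2.2.val))
      (fun y => B.α (wit f y.2.1)) :=
    (proj3_2 _ _ _).congr_out fun y => (wit_α f y.2.1).symm
  have cQα : CompComputes (fun y : S3 =>
      Nat.pair (Dalpha f y.1) (Nat.pair (Dalpha f y.2.1) y.2.2.val))
      (fun y => Qalpha f ⟨(b'' y, wit f y.2.1), eQ y⟩) :=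
    cb''.pair cwit2
  have cK : CompComputes (fun y : S3 =>
      Nat.pair (Dalpha f y.1) (Nat.pair (Dalpha f y.2.1) y.2.2.val))
      (fun y => c ⟨(b'' y, wit f y.2.1), eQ y⟩) :=
    (cc.precomp fun y : S3 => ⟨(b'' y, wit f y.2.1), eQ y⟩).comp cQα
  obtain ⟨σ, mσ, cσ⟩ := B.comp' (fun y : S3 => wit f y.1) b''
    (fun y => wit f y.2.1) (fun y => (ρ₀ y).val)
    (fun y => c ⟨(b'' y, wit f y.2.1), eQ y⟩)
    (fun y => (ρ₀ y).prop) (fun y => mc ⟨(b'' y, wit f y.2.1), eQ y⟩)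
    h1 cb'' cwit2 cρ₀ cK
  refine ⟨hf, Dobj f, wmor f, gmor f,
    ⟨{ f0 := wit f
       f1 := fun x x' ρ => ⟨σ ⟨x, x', ρ⟩, mσ ⟨x, x', ρ⟩⟩
       tr0 := (CompComputes.id _).congr_out fun x => (wit_α f x).symm
       tr1 := cσ }, ?_, ?_⟩, ⟨gfib f hf, ginj f⟩, wg f⟩
  · -- w ≫ v ≃ 𝟙 B
    have eq0 : ∀ b : B.A, f.f0 (wit f ((wmor f).f0 b)) = f.f0 b := by
      intro b; rw [wit_f0 f ((wmor f).f0 b)]; rfl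
    have cQα' : CompComputes (fun b : B.A => B.α b)
        (fun b => Qalpha f ⟨(wit f ((wmor f).f0 b), b), eq0 b⟩) :=
      ((CompComputes.id _).congr_out fun b => (wit_α f ((wmor f).f0 b)).symm).pair
        (CompComputes.id _)
    exact CompComputes.toFinds
      ((cc.precomp fun b : B.A => ⟨(wit f ((wmor f).f0 b), b), eq0 b⟩).comp cQα')
      fun b => mc ⟨(wit f ((wmor f).f0 b), b), eq0 b⟩
  · -- v ≫ w ≃ 𝟙 (Dobj f)
    obtain ⟨ι, mι, cι⟩ := A.id' (fun x : DA f => x.1.1) (Dtr f)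
    refine CompComputes.toFinds cι fun x => ?_
    show ι x ∈ Dhom f _ x
    have hhom : A.hom x.1.1 x.1.1 = Dhom f ⟨(f.f0 (wit f x), B.α (wit f x)), _, rfl, rfl⟩ x := by
      show A.hom x.1.1 x.1.1 = A.hom (f.f0 (wit f x)) x.1.1
      rw [wit_f0 f x]
    exact hhom.subset (mι x)

end EffPaper

namespace EffPaper

/-- (Using the axiom of choice.)  In the path category `EFF` every
propositional fibration is discrete; consequently the class of discrete
propositional fibrations satisfies propositional resizing: every propositional
fibration belongs to it. -/
theorem EFF_propositional_fibrations_are_discrete :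
    (∀ {B A : EffObj} (f : B ⟶ A), IsNTypeFib EffPS 1 f → EffDisc f) ∧
    (∀ {B A : EffObj} (f : B ⟶ A), IsNTypeFib EffPS 1 f →
      EffDisc f ∧ IsNTypeFib EffPS 1 f) :=
  ⟨fun f h => mainDisc f h, fun f h => ⟨mainDisc f h, h⟩⟩

end EffPaper
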